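/- For double linear diagrams G_1, G_2 with marked (ordered) lines, the connected sum G_1 # G_2, formed by gluing the first line of G_1 to the first line of G_2 and the second line of G_1 to the second line of G_2 respecting orientations, satisfies β_{G_1 # G_2} = β_{G_1} + β_{G_2} − c, where c ∈ {1, 2} depends only on G_1 and G_2 (specifically on how the four non-compact components of N(G_1) and N(G_2) connect the line ends) and not on the choice of gluing points. -/

import Mathlib

open FreeAbelianGroup

/-! ## Basic cyclic/linear combinatorics -/

/-- Cyclic successor on `Fin m`. -/
def cyc {m : ℕ} (p : Fin m) : Fin m :=
  ⟨(p.1 + 1) % m, by have := p.2; exact Nat.mod_lt _ (by omega)⟩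

/-- Linear successor on `Fin m` (fixing the last point). -/
def lsuc {m : ℕ} (p : Fin m) : Fin m :=
  if h : p.1 + 1 < m then ⟨p.1 + 1, h⟩ else p

/-- Rotation by `r` on `Fin m`. -/
def rotF {m : ℕ} (r : ℕ) (p : Fin m) : Fin m :=
  ⟨(p.1 + r) % m, by have := p.2; exact Nat.mod_lt _ (by omega)⟩

/-- The point relocation map: removes the point at position `s` and re-inserts it
at position `t`, shifting the intermediate points; it sends old positions to new
positions. -/
def reloc {m : ℕ} (s t : Fin m) (i : Fin m) : Fin m :=
  if s.1 ≤ t.1 then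
    (if i = s then t else if h : s.1 < i.1 ∧ i.1 ≤ t.1 then ⟨i.1 - 1, by have := i.2; omega⟩ else i)
  else
    (if i = s then t else if h : t.1 ≤ i.1 ∧ i.1 < s.1 then ⟨i.1 + 1, by have := s.2; omega⟩ else i)

/-- The "other end" of the chord passing through `p`, for a chord-labelling
function `c` in which every chord label occurs exactly twice. -/
noncomputable def otherPt {α : Type} [Fintype α] [DecidableEq α] {n : ℕ}
    (c : α → Fin n) (p : α) : α :=
  if h : (Finset.univ.filter fun q => c q = c p ∧ q ≠ p).Nonempty then h.choose else p

/-- Number of orbits of the equivalence relation generated by `r`. -/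
noncomputable def orbitCount {α : Type} (r : α → α → Prop) : ℕ :=
  Nat.card (Quotient (Relation.EqvGen.setoid r))

/-! ## Chord diagrams on one circle -/

/-- A chord diagram with `n` chords: `2n` points on an oriented circle labelled by
chords, each chord having exactly two endpoints. -/
structure CD (n : ℕ) where
  c : Fin (2 * n) → Fin n
  two : ∀ j, Fintype.card {p // c p = j} = 2

/-- A framed chord diagram: a chord diagram with a framing in `ℤ/2ℤ` on each chord. -/
structure FCD (n : ℕ) where
  c : Fin (2 * n) → Fin n
  fr : Fin n → ZMod 2
  two : ∀ j, Fintype.card {p // c p = j} = 2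

/-- The number of connected components of the one-manifold obtained by surgery
along all chords of a chord diagram: traversing the surgered curve, the strand
arriving at a point `p` continues from the point right after the other end of the
chord at `p`. -/
noncomputable def betaCD {n : ℕ} (D : CD n) : ℕ :=
  orbitCount (fun p q => cyc (otherPt D.c p) = q)

/-- Chords `j` and `k` appear in alternating (interleaved) position, with an
endpoint of `j` first. -/
def AltOrd {n : ℕ} (c : Fin (2 * n) → Fin n) (j k : Fin n) : Prop :=
  ∃ p₁ q₁ p₂ q₂ : Fin (2 * n), c p₁ = j ∧ c p₂ = j ∧ c q₁ = k ∧ c q₂ = k ∧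
    p₁ < q₁ ∧ q₁ < p₂ ∧ p₂ < q₂

/-- Two chords are interleaved (linked) if their endpoints alternate around the circle. -/
def Interleaved {n : ℕ} (c : Fin (2 * n) → Fin n) (j k : Fin n) : Prop :=
  AltOrd c j k ∨ AltOrd c k j

open Classical in
/-- The interlacement (intersection) matrix over `GF(2)`. -/
noncomputable def interMatrix {n : ℕ} (c : Fin (2 * n) → Fin n) :
    Matrix (Fin n) (Fin n) (ZMod 2) :=
  fun j k => if j ≠ k ∧ Interleaved c j k then 1 else 0

/-- `β` of a framed chord diagram, defined as `corank (A(D) + F(D)) + 1` over `GF(2)`. -/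
noncomputable def betaFCD {n : ℕ} (D : FCD n) : ℕ :=
  (n - (interMatrix D.c + Matrix.diagonal D.fr).rank) + 1

/-- The 2T-relation for chord diagrams: chords `a` and `b`, appearing in
non-interleaved position `a b … b a`, have their endpoints commuted at both
adjacent pairs simultaneously. -/
def TwoTCD {n : ℕ} (D D' : CD n) : Prop :=
  ∃ (p q : Fin (2 * n)) (a b : Fin n), a ≠ b ∧
    p ≠ q ∧ cyc p ≠ q ∧ p ≠ cyc q ∧
    ¬ Interleaved D.c a b ∧
    D.c p = a ∧ D.c (cyc p) = b ∧ D.c q = b ∧ D.c (cyc q) = a ∧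
    D'.c p = b ∧ D'.c (cyc p) = a ∧ D'.c q = a ∧ D'.c (cyc q) = b ∧
    (∀ r, r ≠ p → r ≠ cyc p → r ≠ q → r ≠ cyc q → D'.c r = D.c r)

/-- The framed 2T-relation: as `TwoTCD`, with framings preserved. -/
def TwoTFCD {n : ℕ} (D D' : FCD n) : Prop :=
  ∃ (p q : Fin (2 * n)) (a b : Fin n), a ≠ b ∧
    p ≠ q ∧ cyc p ≠ q ∧ p ≠ cyc q ∧
    ¬ Interleaved D.c a b ∧
    D.c p = a ∧ D.c (cyc p) = b ∧ D.c q = b ∧ D.c (cyc q) = a ∧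
    D'.c p = b ∧ D'.c (cyc p) = a ∧ D'.c q = a ∧ D'.c (cyc q) = b ∧
    (∀ r, r ≠ p → r ≠ cyc p → r ≠ q → r ≠ cyc q → D'.c r = D.c r) ∧
    D'.fr = D.fr

/-- Isomorphism of chord diagrams: a rotation of the core circle together with a
relabelling of the chords. -/
def IsoCD {n : ℕ} (D D' : CD n) : Prop :=
  ∃ (π : Equiv.Perm (Fin n)) (r : ℕ), ∀ p, D'.c p = π (D.c (rotF r p))

/-- Isomorphism of framed chord diagrams. -/
def IsoFCD {n : ℕ} (D D' : FCD n) : Prop :=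
  ∃ (π : Equiv.Perm (Fin n)) (r : ℕ),
    (∀ p, D'.c p = π (D.c (rotF r p))) ∧ (∀ j, D'.fr (π j) = D.fr j)

/-- The 4T-relation quadruple for chord diagrams, with active chords `a`, `b`:
`D₂` is obtained from `D₁` by sliding the endpoint `x = cyc y₁` of `b` past the
endpoint `y₁` of `a`, and `D₄` is obtained from `D₃` by the same slide past the
other endpoint `y₂` of `a`, where `D₃` is `D₁` with `x` relocated next to `y₂`. -/
def FourTQuadCD {n : ℕ} (D₁ D₂ D₃ D₄ : CD n) (a b : Fin n) : Prop :=
  ∃ (y₁ y₂ t : Fin (2 * n)), a ≠ b ∧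
    D₁.c y₁ = a ∧ D₁.c y₂ = a ∧ D₁.c (cyc y₁) = b ∧ y₂ ≠ y₁ ∧ y₂ ≠ cyc y₁ ∧
    (D₂.c y₁ = b ∧ D₂.c (cyc y₁) = a ∧
      ∀ r, r ≠ y₁ → r ≠ cyc y₁ → D₂.c r = D₁.c r) ∧
    (D₃.c ∘ reloc (cyc y₁) t = D₁.c) ∧
    t = cyc (reloc (cyc y₁) t y₂) ∧
    (D₄.c (reloc (cyc y₁) t y₂) = D₃.c t ∧ D₄.c t = D₃.c (reloc (cyc y₁) t y₂) ∧
      ∀ r, r ≠ reloc (cyc y₁) t y₂ → r ≠ t → D₄.c r = D₃.c r)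

/-- The framed 4T-relation quadruple (all framing combinations allowed, framings preserved). -/
def FourTQuadFCD {n : ℕ} (D₁ D₂ D₃ D₄ : FCD n) (a b : Fin n) : Prop :=
  ∃ (y₁ y₂ t : Fin (2 * n)), a ≠ b ∧
    D₁.c y₁ = a ∧ D₁.c y₂ = a ∧ D₁.c (cyc y₁) = b ∧ y₂ ≠ y₁ ∧ y₂ ≠ cyc y₁ ∧
    (D₂.c y₁ = b ∧ D₂.c (cyc y₁) = a ∧
      ∀ r, r ≠ y₁ → r ≠ cyc y₁ → D₂.c r = D₁.c r) ∧
    (D₃.c ∘ reloc (cyc y₁) t = D₁.c) ∧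
    t = cyc (reloc (cyc y₁) t y₂) ∧
    (D₄.c (reloc (cyc y₁) t y₂) = D₃.c t ∧ D₄.c t = D₃.c (reloc (cyc y₁) t y₂) ∧
      ∀ r, r ≠ reloc (cyc y₁) t y₂ → r ≠ t → D₄.c r = D₃.c r) ∧
    D₂.fr = D₁.fr ∧ D₃.fr = D₁.fr ∧ D₄.fr = D₁.fr

/-- Chord diagrams of all sizes. -/
def CDAll : Type := Σ n : ℕ, CD n

/-- Framed chord diagrams of all sizes. -/
def FCDAll : Type := Σ n : ℕ, FCD n

/-- Relators for the module `M` of chord diagrams: isomorphism relators and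
4T-relators. -/
def cdRelators : Set (FreeAbelianGroup CDAll) :=
  {x | (∃ (n : ℕ) (D D' : CD n), IsoCD D D' ∧ x = of ⟨n, D⟩ - of ⟨n, D'⟩) ∨
    (∃ (n : ℕ) (D₁ D₂ D₃ D₄ : CD n) (a b : Fin n), FourTQuadCD D₁ D₂ D₃ D₄ a b ∧
      x = of ⟨n, D₁⟩ - of ⟨n, D₂⟩ - of ⟨n, D₃⟩ + of ⟨n, D₄⟩)}

/-- Relators for the module `M^f` of framed chord diagrams. -/
def fcdRelators : Set (FreeAbelianGroup FCDAll) :=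
  {x | (∃ (n : ℕ) (D D' : FCD n), IsoFCD D D' ∧ x = of ⟨n, D⟩ - of ⟨n, D'⟩) ∨
    (∃ (n : ℕ) (D₁ D₂ D₃ D₄ : FCD n) (a b : Fin n), FourTQuadFCD D₁ D₂ D₃ D₄ a b ∧
      x = of ⟨n, D₁⟩ - of ⟨n, D₂⟩ - of ⟨n, D₃⟩ + of ⟨n, D₄⟩)}

/-- The module `M` of chord diagrams modulo 4T-relations. -/
abbrev ModM : Type := FreeAbelianGroup CDAll ⧸ AddSubgroup.closure cdRelators

/-- The module `M^f` of framed chord diagrams modulo framed 4T-relations. -/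
abbrev ModMf : Type := FreeAbelianGroup FCDAll ⧸ AddSubgroup.closure fcdRelators

noncomputable def mkM : FreeAbelianGroup CDAll →+ ModM :=
  QuotientAddGroup.mk' _

noncomputable def mkMf : FreeAbelianGroup FCDAll →+ ModMf :=
  QuotientAddGroup.mk' _

/-- `C` is a connected sum of `A` and `B`: for some choice of cut points
(rotations `r₁`, `r₂`), the chords of `A` occupy one arc of `C` and the chords of
`B` the complementary arc, in the same cyclic orders. -/
def IsConnSumCD {n₁ n₂ : ℕ} (A : CD n₁) (B : CD n₂) (C : CD (n₁ + n₂)) : Prop :=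
  ∃ r₁ r₂ : ℕ,
    (∀ (i : Fin (2 * (n₁ + n₂))) (hi : i.1 < 2 * n₁),
      C.c i = Fin.castAdd n₂ (A.c ⟨(i.1 + r₁) % (2 * n₁), Nat.mod_lt _ (by omega)⟩)) ∧
    (∀ (i : Fin (2 * (n₁ + n₂))) (hi : 2 * n₁ ≤ i.1),
      C.c i = Fin.natAdd n₁ (B.c ⟨(i.1 - 2 * n₁ + r₂) % (2 * n₂),
        Nat.mod_lt _ (by have := i.2; omega)⟩))

/-- `C` is a connected sum of the framed chord diagrams `A` and `B`. -/
def IsConnSumFCD {n₁ n₂ : ℕ} (A : FCD n₁) (B : FCD n₂) (C : FCD (n₁ + n₂)) : Prop :=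
  (∃ r₁ r₂ : ℕ,
    (∀ (i : Fin (2 * (n₁ + n₂))) (hi : i.1 < 2 * n₁),
      C.c i = Fin.castAdd n₂ (A.c ⟨(i.1 + r₁) % (2 * n₁), Nat.mod_lt _ (by omega)⟩)) ∧
    (∀ (i : Fin (2 * (n₁ + n₂))) (hi : 2 * n₁ ≤ i.1),
      C.c i = Fin.natAdd n₁ (B.c ⟨(i.1 - 2 * n₁ + r₂) % (2 * n₂),
        Nat.mod_lt _ (by have := i.2; omega)⟩))) ∧
    (∀ j, C.fr (Fin.castAdd n₂ j) = A.fr j) ∧ (∀ j, C.fr (Fin.natAdd n₁ j) = B.fr j)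
/-! ## Double chord diagrams (chord diagrams on two circles) -/

/-- A double chord diagram with `n` chords and `m₁`, `m₂` marked points on the two
oriented core circles. -/
structure DCD (n m₁ m₂ : ℕ) where
  c : Fin m₁ ⊕ Fin m₂ → Fin n
  two : ∀ j, Fintype.card {p // c p = j} = 2

/-- Simultaneous cyclic successor on the points of the two circles. -/
def cycS {m₁ m₂ : ℕ} : Fin m₁ ⊕ Fin m₂ → Fin m₁ ⊕ Fin m₂ := Sum.map cyc cyc

/-- The number of connected components of the one-manifold obtained by surgery
along all chords of a double chord diagram (a core circle without chord endpoints
contributes one component). -/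
noncomputable def betaDCD {n m₁ m₂ : ℕ} (G : DCD n m₁ m₂) : ℕ :=
  orbitCount (fun p q => cycS (otherPt G.c p) = q) +
    (if m₁ = 0 then 1 else 0) + (if m₂ = 0 then 1 else 0)

/-- The 2T-relation for double chord diagrams: the endpoints of two chords `a`,
`b`, occurring in two adjacent pairs `a b` and `b a`, are commuted at both pairs
simultaneously. -/
def TwoTDCD {n m₁ m₂ : ℕ} (G G' : DCD n m₁ m₂) : Prop :=
  ∃ (p q : Fin m₁ ⊕ Fin m₂) (a b : Fin n), a ≠ b ∧
    p ≠ q ∧ cycS p ≠ q ∧ p ≠ cycS q ∧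
    G.c p = a ∧ G.c (cycS p) = b ∧ G.c q = b ∧ G.c (cycS q) = a ∧
    G'.c p = b ∧ G'.c (cycS p) = a ∧ G'.c q = a ∧ G'.c (cycS q) = b ∧
    (∀ r, r ≠ p → r ≠ cycS p → r ≠ q → r ≠ cycS q → G'.c r = G.c r)

/-- Isomorphism of double chord diagrams: rotations of the two core circles
together with a relabelling of the chords. -/
def IsoDCD {n m₁ m₂ : ℕ} (G G' : DCD n m₁ m₂) : Prop :=
  ∃ (π : Equiv.Perm (Fin n)) (r₁ r₂ : ℕ),
    ∀ p, G'.c p = π (G.c (Sum.map (rotF r₁) (rotF r₂) p))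

/-- Double chord diagrams of all sizes. -/
def DCDAll : Type := Σ (n m₁ m₂ : ℕ), DCD n m₁ m₂

/-- Relators for the module `M₂` of double chord diagrams: isomorphism relators
and 4T-relators, each 4T-relator being a difference of two 2T-differences. -/
def dcdRelators : Set (FreeAbelianGroup DCDAll) :=
  {x | (∃ (n m₁ m₂ : ℕ) (G G' : DCD n m₁ m₂), IsoDCD G G' ∧
          x = of ⟨n, m₁, m₂, G⟩ - of ⟨n, m₁, m₂, G'⟩) ∨
    (∃ (n m₁ m₂ : ℕ) (G₁ G₂ G₃ G₄ : DCD n m₁ m₂),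
      TwoTDCD G₁ G₂ ∧ TwoTDCD G₃ G₄ ∧
      x = of ⟨n, m₁, m₂, G₁⟩ - of ⟨n, m₁, m₂, G₂⟩ - of ⟨n, m₁, m₂, G₃⟩ + of ⟨n, m₁, m₂, G₄⟩)}

/-- The module `M₂` of double chord diagrams modulo 4T-relations. -/
abbrev ModM2 : Type := FreeAbelianGroup DCDAll ⧸ AddSubgroup.closure dcdRelators

noncomputable def mkM2 : FreeAbelianGroup DCDAll →+ ModM2 :=
  QuotientAddGroup.mk' _

/-- The weight system `w` on linear combinations of double chord diagrams, given
by the number of connected components of the surgery one-manifold. -/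
noncomputable def wDCD : FreeAbelianGroup DCDAll →+ ℤ :=
  FreeAbelianGroup.lift fun G => (betaDCD G.2.2.2 : ℤ)

/-! ## The parity map ψ -/

section Psi

variable {n : ℕ} (D : FCD n) (ε : Fin n → Bool)

/-- The side on which the endpoint `p` is placed, for the choice `ε`: a chord of
framing `0` has both endpoints on the circle chosen by `ε`, a chord of framing `1`
has its endpoints on the two different circles. -/
noncomputable def psiSide (p : Fin (2 * n)) : Bool :=
  if D.fr (D.c p) = 0 then ε (D.c p)
  else xor (ε (D.c p)) (decide (otherPt D.c p < p))

/-- The points placed on the first circle. -/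
noncomputable def psiS1 : Finset (Fin (2 * n)) :=
  Finset.univ.filter fun p => psiSide D ε p = false

/-- The points placed on the second circle. -/
noncomputable def psiS2 : Finset (Fin (2 * n)) :=
  Finset.univ.filter fun p => ¬ psiSide D ε p = false

noncomputable def psiM1 : ℕ := (psiS1 D ε).card
noncomputable def psiM2 : ℕ := (psiS2 D ε).card

/-- Identification of the points of the summand of `ψ` with the points of `D`:
the first circle keeps the order of the core circle of `D`, the second circle
carries the reversed orientation. -/
noncomputable def psiEquiv : (Fin (psiM1 D ε) ⊕ Fin (psiM2 D ε)) ≃ Fin (2 * n) :=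
  (Equiv.sumCongr
    (((psiS1 D ε).orderIsoOfFin rfl).toEquiv.trans
      (Equiv.subtypeEquivRight fun x => by simp [psiS1]))
    ((Fin.revPerm.trans ((psiS2 D ε).orderIsoOfFin rfl).toEquiv).trans
      (Equiv.subtypeEquivRight fun x => by simp [psiS2]))).trans
    (Equiv.sumCompl fun x => psiSide D ε x = false)

/-- The summand of `ψ(D)` corresponding to the choice `ε`. -/
noncomputable def psiSummand : DCD n (psiM1 D ε) (psiM2 D ε) where
  c := D.c ∘ psiEquiv D ε
  two := fun j =>
    (Fintype.card_congr ((psiEquiv D ε).subtypeEquiv fun _ => Iff.rfl)).trans (D.two j)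

/-- The summand of `ψ(D)` as an element of `DCDAll`. -/
noncomputable def psiSummandAll : DCDAll :=
  ⟨n, psiM1 D ε, psiM2 D ε, psiSummand D ε⟩

/-- The parity map `ψ` on a framed chord diagram: the sum of the `2^n` double
chord diagrams obtained by distributing the chords over the two circles. -/
noncomputable def psi : FreeAbelianGroup DCDAll :=
  ∑ ε : Fin n → Bool, of (psiSummandAll D ε)

end Psi
/-! ## Framed linear diagrams -/

/-- A framed linear diagram: `2n` points on an oriented line, paired into `n`
arcs, each arc carrying a framing in `ℤ/2ℤ`. -/
structure FLD (n : ℕ) where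
  c : Fin (2 * n) → Fin n
  fr : Fin n → ZMod 2
  two : ∀ j, Fintype.card {p // c p = j} = 2

/-- The closure of a framed linear diagram: joining the two ends of the line
into an oriented circle. -/
def Cl {n : ℕ} (G : FLD n) : FCD n := ⟨G.c, G.fr, G.two⟩

/-- Isomorphism of framed linear diagrams (relabelling of arcs). -/
def IsoFLD {n : ℕ} (D D' : FLD n) : Prop :=
  ∃ π : Equiv.Perm (Fin n),
    (∀ p, D'.c p = π (D.c p)) ∧ (∀ j, D'.fr (π j) = D.fr j)

/-- The linear 4T-relation quadruple for framed linear diagrams (as the circular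
one, with linear adjacency). -/
def FourTQuadFLD {n : ℕ} (D₁ D₂ D₃ D₄ : FLD n) (a b : Fin n) : Prop :=
  ∃ (y₁ y₂ t : Fin (2 * n)), a ≠ b ∧
    y₁.1 + 1 < 2 * n ∧ (reloc (lsuc y₁) t y₂).1 + 1 < 2 * n ∧
    D₁.c y₁ = a ∧ D₁.c y₂ = a ∧ D₁.c (lsuc y₁) = b ∧ y₂ ≠ y₁ ∧ y₂ ≠ lsuc y₁ ∧
    (D₂.c y₁ = b ∧ D₂.c (lsuc y₁) = a ∧
      ∀ r, r ≠ y₁ → r ≠ lsuc y₁ → D₂.c r = D₁.c r) ∧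
    (D₃.c ∘ reloc (lsuc y₁) t = D₁.c) ∧
    t = lsuc (reloc (lsuc y₁) t y₂) ∧
    (D₄.c (reloc (lsuc y₁) t y₂) = D₃.c t ∧ D₄.c t = D₃.c (reloc (lsuc y₁) t y₂) ∧
      ∀ r, r ≠ reloc (lsuc y₁) t y₂ → r ≠ t → D₄.c r = D₃.c r) ∧
    D₂.fr = D₁.fr ∧ D₃.fr = D₁.fr ∧ D₄.fr = D₁.fr

/-- Framed linear diagrams of all sizes. -/
def FLDAll : Type := Σ n : ℕ, FLD n

/-- Relators for the module `L^f` of framed linear diagrams. -/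
def fldRelators : Set (FreeAbelianGroup FLDAll) :=
  {x | (∃ (n : ℕ) (D D' : FLD n), IsoFLD D D' ∧ x = of ⟨n, D⟩ - of ⟨n, D'⟩) ∨
    (∃ (n : ℕ) (D₁ D₂ D₃ D₄ : FLD n) (a b : Fin n), FourTQuadFLD D₁ D₂ D₃ D₄ a b ∧
      x = of ⟨n, D₁⟩ - of ⟨n, D₂⟩ - of ⟨n, D₃⟩ + of ⟨n, D₄⟩)}

/-- The module `L^f` of framed linear diagrams modulo linear 4T-relations. -/
abbrev ModLf : Type := FreeAbelianGroup FLDAll ⧸ AddSubgroup.closure fldRelators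

noncomputable def mkLf : FreeAbelianGroup FLDAll →+ ModLf :=
  QuotientAddGroup.mk' _

/-! ## Double linear diagrams -/

/-- A double linear diagram with `n` arcs and `m₁`, `m₂` marked points on the two
oriented lines. -/
structure DLD (n m₁ m₂ : ℕ) where
  c : Fin m₁ ⊕ Fin m₂ → Fin n
  two : ∀ j, Fintype.card {p // c p = j} = 2

/-- The segment of the lines lying immediately before the point `p` (the lines with
`mᵢ` marked points consist of `mᵢ + 1` segments). -/
def segBefore {m₁ m₂ : ℕ} : Fin m₁ ⊕ Fin m₂ → Fin (m₁ + 1) ⊕ Fin (m₂ + 1) :=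
  Sum.map Fin.castSucc Fin.castSucc

/-- The segment of the lines lying immediately after the point `p`. -/
def segAfter {m₁ m₂ : ℕ} : Fin m₁ ⊕ Fin m₂ → Fin (m₁ + 1) ⊕ Fin (m₂ + 1) :=
  Sum.map Fin.succ Fin.succ

/-- The number of connected components of the one-manifold obtained by surgery
along all arcs of a double linear diagram: the strand arriving at a point `p`
continues on the segment following the other end of the arc at `p`. -/
noncomputable def betaDLD {n m₁ m₂ : ℕ} (G : DLD n m₁ m₂) : ℕ :=
  orbitCount (fun s t : Fin (m₁ + 1) ⊕ Fin (m₂ + 1) =>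
    ∃ p, s = segBefore p ∧ t = segAfter (otherPt G.c p))

/-- Simultaneous linear successor on the points of the two lines. -/
def lsucS {m₁ m₂ : ℕ} : Fin m₁ ⊕ Fin m₂ → Fin m₁ ⊕ Fin m₂ := Sum.map lsuc lsuc

/-- The linear 2T-relation for double linear diagrams. -/
def TwoTDLD {n m₁ m₂ : ℕ} (G G' : DLD n m₁ m₂) : Prop :=
  ∃ (p q : Fin m₁ ⊕ Fin m₂) (a b : Fin n), a ≠ b ∧
    lsucS p ≠ p ∧ lsucS q ≠ q ∧
    p ≠ q ∧ lsucS p ≠ q ∧ p ≠ lsucS q ∧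
    G.c p = a ∧ G.c (lsucS p) = b ∧ G.c q = b ∧ G.c (lsucS q) = a ∧
    G'.c p = b ∧ G'.c (lsucS p) = a ∧ G'.c q = a ∧ G'.c (lsucS q) = b ∧
    (∀ r, r ≠ p → r ≠ lsucS p → r ≠ q → r ≠ lsucS q → G'.c r = G.c r)

/-- Isomorphism of double linear diagrams (relabelling of arcs). -/
def IsoDLD {n m₁ m₂ : ℕ} (G G' : DLD n m₁ m₂) : Prop :=
  ∃ π : Equiv.Perm (Fin n), ∀ p, G'.c p = π (G.c p)

/-- Double linear diagrams of all sizes. -/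
def DLDAll : Type := Σ (n m₁ m₂ : ℕ), DLD n m₁ m₂

/-- Relators for the module `L₂` of double linear diagrams. -/
def dldRelators : Set (FreeAbelianGroup DLDAll) :=
  {x | (∃ (n m₁ m₂ : ℕ) (G G' : DLD n m₁ m₂), IsoDLD G G' ∧
          x = of ⟨n, m₁, m₂, G⟩ - of ⟨n, m₁, m₂, G'⟩) ∨
    (∃ (n m₁ m₂ : ℕ) (G₁ G₂ G₃ G₄ : DLD n m₁ m₂),
      TwoTDLD G₁ G₂ ∧ TwoTDLD G₃ G₄ ∧
      x = of ⟨n, m₁, m₂, G₁⟩ - of ⟨n, m₁, m₂, G₂⟩ - of ⟨n, m₁, m₂, G₃⟩ + of ⟨n, m₁, m₂, G₄⟩)}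

/-- The module `L₂` of double linear diagrams modulo linear 4T-relations. -/
abbrev ModL2 : Type := FreeAbelianGroup DLDAll ⧸ AddSubgroup.closure dldRelators

noncomputable def mkL2 : FreeAbelianGroup DLDAll →+ ModL2 :=
  QuotientAddGroup.mk' _

/-- The weight system `w_l` on linear combinations of double linear diagrams. -/
noncomputable def wDLD : FreeAbelianGroup DLDAll →+ ℤ :=
  FreeAbelianGroup.lift fun G => (betaDLD G.2.2.2 : ℤ)

/-! ## The parity map ψₗ for linear diagrams -/

section PsiL

variable {n : ℕ} (D : FLD n) (ε : Fin n → Bool)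

/-- The side on which the endpoint `p` is placed, for the choice `ε`. -/
noncomputable def psiLSide (p : Fin (2 * n)) : Bool :=
  if D.fr (D.c p) = 0 then ε (D.c p)
  else xor (ε (D.c p)) (decide (otherPt D.c p < p))

noncomputable def psiLS1 : Finset (Fin (2 * n)) :=
  Finset.univ.filter fun p => psiLSide D ε p = false

noncomputable def psiLS2 : Finset (Fin (2 * n)) :=
  Finset.univ.filter fun p => ¬ psiLSide D ε p = false

noncomputable def psiLM1 : ℕ := (psiLS1 D ε).card
noncomputable def psiLM2 : ℕ := (psiLS2 D ε).card

/-- Identification of the points of the summand of `ψₗ` with the points of `D`;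
the second line carries the reversed orientation. -/
noncomputable def psiLEquiv : (Fin (psiLM1 D ε) ⊕ Fin (psiLM2 D ε)) ≃ Fin (2 * n) :=
  (Equiv.sumCongr
    (((psiLS1 D ε).orderIsoOfFin rfl).toEquiv.trans
      (Equiv.subtypeEquivRight fun x => by simp [psiLS1]))
    ((Fin.revPerm.trans ((psiLS2 D ε).orderIsoOfFin rfl).toEquiv).trans
      (Equiv.subtypeEquivRight fun x => by simp [psiLS2]))).trans
    (Equiv.sumCompl fun x => psiLSide D ε x = false)

/-- The summand of `ψₗ(D)` corresponding to the choice `ε`. -/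
noncomputable def psiLSummand : DLD n (psiLM1 D ε) (psiLM2 D ε) where
  c := D.c ∘ psiLEquiv D ε
  two := fun j =>
    (Fintype.card_congr ((psiLEquiv D ε).subtypeEquiv fun _ => Iff.rfl)).trans (D.two j)

/-- The summand of `ψₗ(D)` as an element of `DLDAll`. -/
noncomputable def psiLSummandAll : DLDAll :=
  ⟨n, psiLM1 D ε, psiLM2 D ε, psiLSummand D ε⟩

/-- The parity map `ψₗ` on a framed linear diagram. -/
noncomputable def psiL : FreeAbelianGroup DLDAll :=
  ∑ ε : Fin n → Bool, of (psiLSummandAll D ε)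

end PsiL

/-! ## Concatenation of linear diagrams -/

/-- Identification of the points of `G₁ # G₂` with the points of `G₁` and `G₂`. -/
def concatEquiv (n₁ n₂ : ℕ) : Fin (2 * (n₁ + n₂)) ≃ (Fin (2 * n₁) ⊕ Fin (2 * n₂)) :=
  (finCongr (by ring)).trans finSumFinEquiv.symm

/-- The connected sum (concatenation) `G₁ # G₂` of two framed linear diagrams. -/
def concatFLD {n₁ n₂ : ℕ} (G₁ : FLD n₁) (G₂ : FLD n₂) : FLD (n₁ + n₂) where
  c := Sum.elim (Fin.castAdd n₂ ∘ G₁.c) (Fin.natAdd n₁ ∘ G₂.c) ∘ concatEquiv n₁ n₂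
  fr := Sum.elim G₁.fr G₂.fr ∘ finSumFinEquiv.symm
  two := by
    intro j
    set P : Fin (2 * n₁) ⊕ Fin (2 * n₂) → Fin (n₁ + n₂) :=
      Sum.elim (Fin.castAdd n₂ ∘ G₁.c) (Fin.natAdd n₁ ∘ G₂.c) with hP
    have e1 : Fintype.card {p // (P ∘ concatEquiv n₁ n₂) p = j} =
        Fintype.card {q // P q = j} :=
      Fintype.card_congr ((concatEquiv n₁ n₂).subtypeEquiv fun _ => Iff.rfl)
    have e2 : Fintype.card {q // P q = j} =
        Fintype.card {x : Fin (2 * n₁) // P (Sum.inl x) = j} +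
          Fintype.card {y : Fin (2 * n₂) // P (Sum.inr y) = j} := by
      rw [Fintype.card_congr (Equiv.subtypeSum (p := fun q => P q = j))]
      exact Fintype.card_sum
    show Fintype.card {p // (P ∘ concatEquiv n₁ n₂) p = j} = 2
    rw [e1, e2]
    induction j using Fin.addCases with
    | left j =>
      have h2 : Fintype.card {y : Fin (2 * n₂) // P (Sum.inr y) = Fin.castAdd n₂ j} = 0 := by
        rw [Fintype.card_eq_zero_iff]
        refine ⟨fun ⟨y, hy⟩ => ?_⟩
        have hj := j.2
        simp only [hP, Sum.elim_inr, Function.comp_apply, Fin.ext_iff,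
          Fin.coe_natAdd, Fin.coe_castAdd] at hy
        omega
      have h1 : Fintype.card {x : Fin (2 * n₁) // P (Sum.inl x) = Fin.castAdd n₂ j} = 2 := by
        rw [Fintype.card_congr (Equiv.subtypeEquivRight
          (p := fun x => P (Sum.inl x) = Fin.castAdd n₂ j)
          (q := fun x => G₁.c x = j) fun x => by
          simp only [hP, Sum.elim_inl, Function.comp_apply, Fin.castAdd_inj])]
        exact G₁.two j
      omega
    | right j =>
      have h1 : Fintype.card {x : Fin (2 * n₁) // P (Sum.inl x) = Fin.natAdd n₁ j} = 0 := by
        rw [Fintype.card_eq_zero_iff]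
        refine ⟨fun ⟨x, hx⟩ => ?_⟩
        have hx2 := (G₁.c x).2
        simp only [hP, Sum.elim_inl, Function.comp_apply, Fin.ext_iff,
          Fin.coe_natAdd, Fin.coe_castAdd] at hx
        omega
      have h2 : Fintype.card {y : Fin (2 * n₂) // P (Sum.inr y) = Fin.natAdd n₁ j} = 2 := by
        rw [Fintype.card_congr (Equiv.subtypeEquivRight
          (p := fun y => P (Sum.inr y) = Fin.natAdd n₁ j)
          (q := fun y => G₂.c y = j) fun y => by
          simp only [hP, Sum.elim_inr, Function.comp_apply, Fin.ext_iff,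
            Fin.coe_natAdd]
          omega)]
        exact G₂.two j
      omega

/-- `G` is the marked concatenation (connected sum) of the double linear diagrams
`X` and `Y`: the first (resp. second) line of `X` is glued to the beginning of the
first (resp. second) line of `Y`. -/
def IsConcatDLD {n n' a₁ a₂ b₁ b₂ : ℕ} (X : DLD n a₁ a₂) (Y : DLD n' b₁ b₂)
    (G : DLD (n + n') (a₁ + b₁) (a₂ + b₂)) : Prop :=
  (∀ i : Fin a₁, G.c (Sum.inl (Fin.castAdd b₁ i)) = Fin.castAdd n' (X.c (Sum.inl i))) ∧
  (∀ i : Fin b₁, G.c (Sum.inl (Fin.natAdd a₁ i)) = Fin.natAdd n (Y.c (Sum.inl i))) ∧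
  (∀ i : Fin a₂, G.c (Sum.inr (Fin.castAdd b₂ i)) = Fin.castAdd n' (X.c (Sum.inr i))) ∧
  (∀ i : Fin b₂, G.c (Sum.inr (Fin.natAdd a₂ i)) = Fin.natAdd n (Y.c (Sum.inr i)))

/-- The marked concatenation relation on double linear diagrams of arbitrary sizes. -/
def IsConcatDLDAll (x y z : DLDAll) : Prop :=
  ∃ (n n' a₁ a₂ b₁ b₂ : ℕ) (X : DLD n a₁ a₂) (Y : DLD n' b₁ b₂)
    (G : DLD (n + n') (a₁ + b₁) (a₂ + b₂)),
    x = ⟨n, a₁, a₂, X⟩ ∧ y = ⟨n', b₁, b₂, Y⟩ ∧ z = ⟨n + n', a₁ + b₁, a₂ + b₂, G⟩ ∧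
    IsConcatDLD X Y G
/-! ## Symmetries of double chord diagrams -/

/-- The double chord diagram obtained by simultaneously reversing the
orientations of both core circles. -/
noncomputable def revBoth {n m₁ m₂ : ℕ} (G : DCD n m₁ m₂) : DCD n m₁ m₂ where
  c := G.c ∘ (Equiv.sumCongr (Fin.revPerm (n := m₁)) (Fin.revPerm (n := m₂)))
  two := fun j =>
    (Fintype.card_congr ((Equiv.sumCongr (Fin.revPerm (n := m₁))
      (Fin.revPerm (n := m₂))).subtypeEquiv fun _ => Iff.rfl)).trans (G.two j)

/-- The double chord diagram obtained by exchanging the two core circles. -/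
noncomputable def swapCirc {n m₁ m₂ : ℕ} (G : DCD n m₁ m₂) : DCD n m₂ m₁ where
  c := G.c ∘ (Equiv.sumComm (Fin m₂) (Fin m₁))
  two := fun j =>
    (Fintype.card_congr ((Equiv.sumComm (Fin m₂) (Fin m₁)).subtypeEquiv
      fun _ => Iff.rfl)).trans (G.two j)

/-- Isomorphism of double chord diagrams of arbitrary sizes. -/
def IsoDCDAll (x y : DCDAll) : Prop :=
  ∃ (n m₁ m₂ : ℕ) (G G' : DCD n m₁ m₂),
    x = ⟨n, m₁, m₂, G⟩ ∧ y = ⟨n, m₁, m₂, G'⟩ ∧ IsoDCD G G'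

/-- Exchanging the two circles combined with reversing both orientations. -/
noncomputable def swapRevAll (x : DCDAll) : DCDAll :=
  ⟨x.1, x.2.2.1, x.2.1, swapCirc (revBoth x.2.2.2)⟩

/-- The chord `j` of a double chord diagram joins the two core circles. -/
def JoinsCircles {n m₁ m₂ : ℕ} (G : DCD n m₁ m₂) (j : Fin n) : Prop :=
  ∃ (p : Fin m₁) (q : Fin m₂), G.c (Sum.inl p) = j ∧ G.c (Sum.inr q) = j

/-! ## Auxiliary infrastructure for Statement 9 -/

namespace BetaConcatAux

open Relation

private lemma eqvGen_eq {α : Type*} {β : Type*} {r : α → α → Prop} {f : α → β}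
    (h : ∀ a b, r a b → f a = f b) :
    ∀ a b, EqvGen r a b → f a = f b := by
  intro a b hab
  induction hab with
  | rel x y h' => exact h x y h'
  | refl x => rfl
  | symm x y _ ih => exact ih.symm
  | trans x y z _ _ ih1 ih2 => exact ih1.trans ih2

private lemma mkcongr {α : Sort*} (s : Setoid α) {x y : α} (h : x = y) :
    Quotient.mk s x = Quotient.mk s y := congrArg _ h

private lemma otherPt_spec {α : Type} [Fintype α] [DecidableEq α] {n : ℕ}
    (c : α → Fin n) (two : ∀ j, Fintype.card {p // c p = j} = 2) (p : α) :
    c (otherPt c p) = c p ∧ otherPt c p ≠ p ∧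
      ∀ q, c q = c p → q ≠ p → q = otherPt c p := by
  have hfilter : (Finset.univ.filter fun q => c q = c p).card = 2 := by
    rw [← Fintype.card_subtype]; exact two (c p)
  have hpm : p ∈ Finset.univ.filter fun q => c q = c p := by simp
  have hse : (Finset.univ.filter fun q => c q = c p ∧ q ≠ p)
      = (Finset.univ.filter fun q => c q = c p).erase p := by
    ext q
    simp only [Finset.mem_filter, Finset.mem_erase, Finset.mem_univ, true_and]
    tauto
  have hcard : (Finset.univ.filter fun q => c q = c p ∧ q ≠ p).card = 1 := by
    rw [hse, Finset.card_erase_of_mem hpm, hfilter]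
  have hne : (Finset.univ.filter fun q => c q = c p ∧ q ≠ p).Nonempty :=
    Finset.card_pos.mp (by omega)
  have hval : otherPt c p = hne.choose := by
    unfold otherPt
    rw [dif_pos hne]
  have hmem : otherPt c p ∈ Finset.univ.filter fun q => c q = c p ∧ q ≠ p :=
    hval ▸ hne.choose_spec
  have hmem' := Finset.mem_filter.mp hmem
  refine ⟨hmem'.2.1, hmem'.2.2, fun q hq hq' => ?_⟩
  have hqs : q ∈ Finset.univ.filter fun q => c q = c p ∧ q ≠ p :=
    Finset.mem_filter.mpr ⟨Finset.mem_univ _, hq, hq'⟩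
  exact Finset.card_le_one.mp (le_of_eq hcard) _ hqs _ hmem

private lemma card_subtype_add {α : Type*} [Finite α] (p : α → Prop) :
    Nat.card {x // p x} + Nat.card {x // ¬ p x} = Nat.card α := by
  classical
  cases nonempty_fintype α
  simp only [Nat.card_eq_fintype_card, Fintype.card_subtype]
  exact Finset.card_filter_add_card_filter_not p

private lemma card_subtype_single {α : Type*} (a : α) (p : α → Prop)
    (h : ∀ x, p x ↔ x = a) : Nat.card {x // p x} = 1 := by
  haveI : Unique {x // p x} :=
    { default := ⟨a, (h a).mpr rfl⟩
      uniq := fun x => Subtype.ext ((h x.1).mp x.2) }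
  exact Nat.card_unique

private lemma card_subtype_pair {α : Type*} [Finite α] {a b : α} (hab : a ≠ b) (p : α → Prop)
    (h : ∀ x, p x ↔ x = a ∨ x = b) : Nat.card {x // p x} = 2 :=
  calc Nat.card {x // p x} = Nat.card ({a, b} : Set α) :=
        Nat.card_congr (Equiv.subtypeEquivRight (fun x => by simp [h x]))
    _ = ({a, b} : Set α).ncard := Nat.card_coe_set_eq _
    _ = 2 := Set.ncard_pair hab

/-- The surgery-traversal relation on segments of a double linear diagram. -/
def rrD {n m₁ m₂ : ℕ} (Z : DLD n m₁ m₂) :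
    (Fin (m₁ + 1) ⊕ Fin (m₂ + 1)) → (Fin (m₁ + 1) ⊕ Fin (m₂ + 1)) → Prop :=
  fun s t => ∃ p, s = segBefore p ∧ t = segAfter (otherPt Z.c p)

private lemma betaD_eq {n m₁ m₂ : ℕ} (Z : DLD n m₁ m₂) :
    betaDLD Z = Nat.card (Quotient (Relation.EqvGen.setoid (rrD Z))) := rfl

/-- Embedding of the segments of the first factor. -/
def phiXmap (a₁ a₂ b₁ b₂ : ℕ) :
    Fin (a₁ + 1) ⊕ Fin (a₂ + 1) → Fin (a₁ + b₁ + 1) ⊕ Fin (a₂ + b₂ + 1) :=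
  Sum.map (fun i => ⟨i.1, by have := i.2; omega⟩) (fun i => ⟨i.1, by have := i.2; omega⟩)

/-- Embedding of the segments of the second factor. -/
def phiYmap (a₁ a₂ b₁ b₂ : ℕ) :
    Fin (b₁ + 1) ⊕ Fin (b₂ + 1) → Fin (a₁ + b₁ + 1) ⊕ Fin (a₂ + b₂ + 1) :=
  Sum.map (fun i => ⟨a₁ + i.1, by have := i.2; omega⟩) (fun i => ⟨a₂ + i.1, by have := i.2; omega⟩)

/-- Embedding of the points of the first factor. -/
def iXmap (a₁ a₂ b₁ b₂ : ℕ) : Fin a₁ ⊕ Fin a₂ → Fin (a₁ + b₁) ⊕ Fin (a₂ + b₂) :=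
  Sum.map (Fin.castAdd b₁) (Fin.castAdd b₂)

/-- Embedding of the points of the second factor. -/
def iYmap (a₁ a₂ b₁ b₂ : ℕ) : Fin b₁ ⊕ Fin b₂ → Fin (a₁ + b₁) ⊕ Fin (a₂ + b₂) :=
  Sum.map (Fin.natAdd a₁) (Fin.natAdd a₂)

private lemma segBefore_iX (a₁ a₂ b₁ b₂ : ℕ) (p : Fin a₁ ⊕ Fin a₂) :
    segBefore (iXmap a₁ a₂ b₁ b₂ p) = phiXmap a₁ a₂ b₁ b₂ (segBefore p) := by
  cases p <;> rfl

private lemma segAfter_iX (a₁ a₂ b₁ b₂ : ℕ) (p : Fin a₁ ⊕ Fin a₂) :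
    segAfter (iXmap a₁ a₂ b₁ b₂ p) = phiXmap a₁ a₂ b₁ b₂ (segAfter p) := by
  cases p <;> rfl

private lemma segBefore_iY (a₁ a₂ b₁ b₂ : ℕ) (p : Fin b₁ ⊕ Fin b₂) :
    segBefore (iYmap a₁ a₂ b₁ b₂ p) = phiYmap a₁ a₂ b₁ b₂ (segBefore p) := by
  cases p <;> rfl

private lemma segAfter_iY (a₁ a₂ b₁ b₂ : ℕ) (p : Fin b₁ ⊕ Fin b₂) :
    segAfter (iYmap a₁ a₂ b₁ b₂ p) = phiYmap a₁ a₂ b₁ b₂ (segAfter p) := by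
  cases p <;> rfl

section Main

variable {n n' a₁ a₂ b₁ b₂ : ℕ}

/-- Class of the last segment of the first line of `X`. -/
def Ecl1 (X : DLD n a₁ a₂) : Quotient (Relation.EqvGen.setoid (rrD X)) :=
  Quotient.mk _ (Sum.inl (Fin.last a₁))

/-- Class of the last segment of the second line of `X`. -/
def Ecl2 (X : DLD n a₁ a₂) : Quotient (Relation.EqvGen.setoid (rrD X)) :=
  Quotient.mk _ (Sum.inr (Fin.last a₂))

/-- Class of the first segment of the first line of `Y`. -/
def Scl1 (Y : DLD n' b₁ b₂) : Quotient (Relation.EqvGen.setoid (rrD Y)) :=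
  Quotient.mk _ (Sum.inl (0 : Fin (b₁ + 1)))

/-- Class of the first segment of the second line of `Y`. -/
def Scl2 (Y : DLD n' b₁ b₂) : Quotient (Relation.EqvGen.setoid (rrD Y)) :=
  Quotient.mk _ (Sum.inr (0 : Fin (b₂ + 1)))

/-- The gluing relation on the disjoint union of the two segment-orbit spaces. -/
def rho (X : DLD n a₁ a₂) (Y : DLD n' b₁ b₂) :
    (Quotient (Relation.EqvGen.setoid (rrD X)) ⊕ Quotient (Relation.EqvGen.setoid (rrD Y))) →
    (Quotient (Relation.EqvGen.setoid (rrD X)) ⊕ Quotient (Relation.EqvGen.setoid (rrD Y))) →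
    Prop :=
  fun u v => (u = Sum.inl (Ecl1 X) ∧ v = Sum.inr (Scl1 Y)) ∨
    (u = Sum.inl (Ecl2 X) ∧ v = Sum.inr (Scl2 Y))

open Classical in
/-- The collapse map realizing the quotient by `rho`. -/
noncomputable def dmap (X : DLD n a₁ a₂) (Y : DLD n' b₁ b₂) :
    (Quotient (Relation.EqvGen.setoid (rrD X)) ⊕ Quotient (Relation.EqvGen.setoid (rrD Y))) →
    (Quotient (Relation.EqvGen.setoid (rrD X)) ⊕ Quotient (Relation.EqvGen.setoid (rrD Y))) :=
  fun x =>
    if x = Sum.inl (Ecl1 X) ∨ x = Sum.inr (Scl1 Y) then Sum.inl (Ecl1 X)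
    else if x = Sum.inl (Ecl2 X) ∨ x = Sum.inr (Scl2 Y) then
      (if Ecl1 X = Ecl2 X ∨ Scl1 Y = Scl2 Y then Sum.inl (Ecl1 X) else Sum.inl (Ecl2 X))
    else x

variable (X : DLD n a₁ a₂) (Y : DLD n' b₁ b₂)

private lemma dmap_E1 : dmap X Y (Sum.inl (Ecl1 X)) = Sum.inl (Ecl1 X) := by
  simp only [dmap]; rw [if_pos (Or.inl rfl)]

private lemma dmap_S1 : dmap X Y (Sum.inr (Scl1 Y)) = Sum.inl (Ecl1 X) := by
  simp only [dmap]; rw [if_pos (Or.inr rfl)]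

open Classical in
private lemma dmap_E2 : dmap X Y (Sum.inl (Ecl2 X)) =
    (if Ecl1 X = Ecl2 X ∨ Scl1 Y = Scl2 Y then Sum.inl (Ecl1 X) else Sum.inl (Ecl2 X)) := by
  simp only [dmap]
  by_cases h1 : (Sum.inl (Ecl2 X) : Quotient (Relation.EqvGen.setoid (rrD X)) ⊕
      Quotient (Relation.EqvGen.setoid (rrD Y))) = Sum.inl (Ecl1 X) ∨
      (Sum.inl (Ecl2 X) : Quotient (Relation.EqvGen.setoid (rrD X)) ⊕
      Quotient (Relation.EqvGen.setoid (rrD Y))) = Sum.inr (Scl1 Y)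
  · rw [if_pos h1]
    rcases h1 with h1 | h1
    · have hE : Ecl1 X = Ecl2 X := (Sum.inl.inj h1).symm
      rw [if_pos (Or.inl hE)]
    · exact absurd h1 (by simp)
  · rw [if_neg h1]
    exact if_pos (Or.inl trivial)

open Classical in
private lemma dmap_S2 : dmap X Y (Sum.inr (Scl2 Y)) =
    (if Ecl1 X = Ecl2 X ∨ Scl1 Y = Scl2 Y then Sum.inl (Ecl1 X) else Sum.inl (Ecl2 X)) := by
  simp only [dmap]
  by_cases h1 : (Sum.inr (Scl2 Y) : Quotient (Relation.EqvGen.setoid (rrD X)) ⊕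
      Quotient (Relation.EqvGen.setoid (rrD Y))) = Sum.inl (Ecl1 X) ∨
      (Sum.inr (Scl2 Y) : Quotient (Relation.EqvGen.setoid (rrD X)) ⊕
      Quotient (Relation.EqvGen.setoid (rrD Y))) = Sum.inr (Scl1 Y)
  · rw [if_pos h1]
    rcases h1 with h1 | h1
    · exact absurd h1 (by simp)
    · have hS : Scl1 Y = Scl2 Y := (Sum.inr.inj h1).symm
      rw [if_pos (Or.inr hS)]
  · rw [if_neg h1]
    exact if_pos (Or.inr trivial)

private lemma dmap_other (x) (h1 : x ≠ Sum.inl (Ecl1 X)) (h2 : x ≠ Sum.inl (Ecl2 X))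
    (h3 : x ≠ Sum.inr (Scl1 Y)) (h4 : x ≠ Sum.inr (Scl2 Y)) : dmap X Y x = x := by
  simp only [dmap]
  rw [if_neg (by tauto), if_neg (by tauto)]

private lemma dmap_rho : ∀ u v, rho X Y u v → dmap X Y u = dmap X Y v := by
  rintro u v (⟨rfl, rfl⟩ | ⟨rfl, rfl⟩)
  · rw [dmap_E1, dmap_S1]
  · rw [dmap_E2, dmap_S2]

private lemma eqvGen_dmap (x) : Relation.EqvGen (rho X Y) x (dmap X Y x) := by
  have g1 : Relation.EqvGen (rho X Y) (Sum.inl (Ecl1 X)) (Sum.inr (Scl1 Y)) :=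
    Relation.EqvGen.rel _ _ (Or.inl ⟨rfl, rfl⟩)
  have g2 : Relation.EqvGen (rho X Y) (Sum.inl (Ecl2 X)) (Sum.inr (Scl2 Y)) :=
    Relation.EqvGen.rel _ _ (Or.inr ⟨rfl, rfl⟩)
  by_cases h3 : x = Sum.inr (Scl1 Y)
  · subst h3; rw [dmap_S1]; exact Relation.EqvGen.symm _ _ g1
  by_cases h4 : x = Sum.inr (Scl2 Y)
  · subst h4
    rw [dmap_S2]
    split_ifs with h
    · rcases h with h | h
      · rw [h]; exact Relation.EqvGen.symm _ _ g2
      · rw [← h]; exact Relation.EqvGen.symm _ _ g1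
    · exact Relation.EqvGen.symm _ _ g2
  by_cases h2 : x = Sum.inl (Ecl2 X)
  · subst h2
    rw [dmap_E2]
    split_ifs with h
    · rcases h with h | h
      · rw [← h]; exact Relation.EqvGen.refl _
      · refine Relation.EqvGen.trans _ _ _ g2 ?_
        rw [← h]
        exact Relation.EqvGen.symm _ _ g1
    · exact Relation.EqvGen.refl _
  by_cases h1 : x = Sum.inl (Ecl1 X)
  · subst h1; rw [dmap_E1]; exact Relation.EqvGen.refl _
  · rw [dmap_other X Y x h1 h2 h3 h4]; exact Relation.EqvGen.refl _

private lemma dmap_idem (x) : dmap X Y (dmap X Y x) = dmap X Y x :=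
  eqvGen_eq (dmap_rho X Y) _ _ (Relation.EqvGen.symm _ _ (eqvGen_dmap X Y x))

private lemma count_rho :
    Nat.card (Quotient (Relation.EqvGen.setoid (rho X Y))) +
      Nat.card {x // ¬ dmap X Y x = x} =
    Nat.card (Quotient (Relation.EqvGen.setoid (rrD X))) +
      Nat.card (Quotient (Relation.EqvGen.setoid (rrD Y))) := by
  have e : Quotient (Relation.EqvGen.setoid (rho X Y)) ≃ {x // dmap X Y x = x} :=
    { toFun := Quotient.lift (fun x => (⟨dmap X Y x, dmap_idem X Y x⟩ : {x // dmap X Y x = x}))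
        (fun a b h => Subtype.ext (eqvGen_eq (dmap_rho X Y) a b h))
      invFun := fun x => Quotient.mk _ x.1
      left_inv := by
        refine Quotient.ind ?_
        intro x
        exact Quotient.sound (Relation.EqvGen.symm _ _ (eqvGen_dmap X Y x))
      right_inv := fun x => Subtype.ext x.2 }
  rw [Nat.card_congr e, ← Nat.card_sum (α := Quotient (Relation.EqvGen.setoid (rrD X)))
    (β := Quotient (Relation.EqvGen.setoid (rrD Y)))]
  exact card_subtype_add _

private lemma moved_iff (x) :
    (¬ dmap X Y x = x) ↔ (x = Sum.inr (Scl1 Y) ∨ x = Sum.inr (Scl2 Y) ∨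
      (x = Sum.inl (Ecl2 X) ∧ ¬ Ecl1 X = Ecl2 X ∧ Scl1 Y = Scl2 Y)) := by
  by_cases h3 : x = Sum.inr (Scl1 Y)
  · subst h3; rw [dmap_S1]
    exact iff_of_true (by simp) (Or.inl rfl)
  by_cases h4 : x = Sum.inr (Scl2 Y)
  · subst h4; rw [dmap_S2]
    refine iff_of_true ?_ (Or.inr (Or.inl rfl))
    split_ifs <;> simp
  by_cases h2 : x = Sum.inl (Ecl2 X)
  · subst h2; rw [dmap_E2]
    by_cases hE : Ecl1 X = Ecl2 X
    · rw [if_pos (Or.inl hE), hE]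
      refine iff_of_false (by simp) ?_
      rintro (h | h | ⟨-, hne, -⟩)
      · exact Sum.inl_ne_inr h
      · exact Sum.inl_ne_inr h
      · exact hne rfl
    · by_cases hS : Scl1 Y = Scl2 Y
      · rw [if_pos (Or.inr hS)]
        refine iff_of_true ?_ (Or.inr (Or.inr ⟨rfl, hE, hS⟩))
        intro hcc
        exact hE (Sum.inl.inj hcc)
      · rw [if_neg (by tauto)]
        refine iff_of_false (by simp) ?_
        rintro (h | h | ⟨-, -, h⟩)
        · exact Sum.inl_ne_inr h
        · exact Sum.inl_ne_inr h
        · exact hS h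
  by_cases h1 : x = Sum.inl (Ecl1 X)
  · subst h1; rw [dmap_E1]
    refine iff_of_false (by simp) ?_
    rintro (h | h | ⟨h, hne, -⟩)
    · exact Sum.inl_ne_inr h
    · exact Sum.inl_ne_inr h
    · exact hne (Sum.inl.inj h)
  · rw [dmap_other X Y x h1 h2 h3 h4]
    refine iff_of_false (by simp) ?_
    rintro (h | h | ⟨h, -, -⟩)
    exacts [h3 h, h4 h, h2 h]

private lemma moved_card :
    Nat.card {x // ¬ dmap X Y x = x} = 1 ∨ Nat.card {x // ¬ dmap X Y x = x} = 2 := by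
  by_cases hE : Ecl1 X = Ecl2 X
  · by_cases hS : Scl1 Y = Scl2 Y
    · left
      refine card_subtype_single (Sum.inr (Scl1 Y)) _ (fun x => ?_)
      rw [moved_iff X Y x]
      constructor
      · rintro (h | h | ⟨-, hne, -⟩)
        · exact h
        · exact h.trans (by rw [hS])
        · exact absurd hE hne
      · intro h; exact Or.inl h
    · right
      refine card_subtype_pair (a := Sum.inr (Scl1 Y)) (b := Sum.inr (Scl2 Y))
        (by simpa using hS) _ (fun x => ?_)
      rw [moved_iff X Y x]
      constructor
      · rintro (h | h | ⟨-, -, h⟩)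
        exacts [Or.inl h, Or.inr h, absurd h hS]
      · rintro (h | h)
        exacts [Or.inl h, Or.inr (Or.inl h)]
  · by_cases hS : Scl1 Y = Scl2 Y
    · right
      refine card_subtype_pair (a := Sum.inr (Scl1 Y)) (b := Sum.inl (Ecl2 X))
        (by simp) _ (fun x => ?_)
      rw [moved_iff X Y x]
      constructor
      · rintro (h | h | ⟨h, -, -⟩)
        exacts [Or.inl h, Or.inl (h.trans (by rw [hS])), Or.inr h]
      · rintro (h | h)
        exacts [Or.inl h, Or.inr (Or.inr ⟨h, hE, hS⟩)]
    · right
      refine card_subtype_pair (a := Sum.inr (Scl1 Y)) (b := Sum.inr (Scl2 Y))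
        (by simpa using hS) _ (fun x => ?_)
      rw [moved_iff X Y x]
      constructor
      · rintro (h | h | ⟨-, -, h⟩)
        exacts [Or.inl h, Or.inr h, absurd h hS]
      · rintro (h | h)
        exacts [Or.inl h, Or.inr (Or.inl h)]

private lemma rho_rel1 (u : Quotient (Relation.EqvGen.setoid (rrD X)))
    (v : Quotient (Relation.EqvGen.setoid (rrD Y)))
    (hu : u = Ecl1 X) (hv : v = Scl1 Y) :
    Quotient.mk (Relation.EqvGen.setoid (rho X Y)) (Sum.inl u) =
      Quotient.mk (Relation.EqvGen.setoid (rho X Y)) (Sum.inr v) := by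
  subst hu; subst hv
  exact Quotient.sound (Relation.EqvGen.rel _ _ (Or.inl ⟨rfl, rfl⟩))

private lemma rho_rel2 (u : Quotient (Relation.EqvGen.setoid (rrD X)))
    (v : Quotient (Relation.EqvGen.setoid (rrD Y)))
    (hu : u = Ecl2 X) (hv : v = Scl2 Y) :
    Quotient.mk (Relation.EqvGen.setoid (rho X Y)) (Sum.inl u) =
      Quotient.mk (Relation.EqvGen.setoid (rho X Y)) (Sum.inr v) := by
  subst hu; subst hv
  exact Quotient.sound (Relation.EqvGen.rel _ _ (Or.inr ⟨rfl, rfl⟩))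

/-- The map identifying segments of the concatenation with segments of the factors. -/
def chiMap (X : DLD n a₁ a₂) (Y : DLD n' b₁ b₂) :
    Fin (a₁ + b₁ + 1) ⊕ Fin (a₂ + b₂ + 1) →
      Quotient (Relation.EqvGen.setoid (rrD X)) ⊕ Quotient (Relation.EqvGen.setoid (rrD Y)) :=
  fun s =>
    Sum.elim
      (fun j => if h : j.1 ≤ a₁ then
          Sum.inl (Quotient.mk _ (Sum.inl (⟨j.1, by omega⟩ : Fin (a₁ + 1))))
        else
          Sum.inr (Quotient.mk _ (Sum.inl (⟨j.1 - a₁, by have := j.2; omega⟩ : Fin (b₁ + 1)))))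
      (fun j => if h : j.1 ≤ a₂ then
          Sum.inl (Quotient.mk _ (Sum.inr (⟨j.1, by omega⟩ : Fin (a₂ + 1))))
        else
          Sum.inr (Quotient.mk _ (Sum.inr (⟨j.1 - a₂, by have := j.2; omega⟩ : Fin (b₂ + 1)))))
      s

private lemma chi_phiX (u : Fin (a₁ + 1) ⊕ Fin (a₂ + 1)) :
    chiMap X Y (phiXmap a₁ a₂ b₁ b₂ u) = Sum.inl (Quotient.mk _ u) := by
  rcases u with i | i <;>
  · simp only [chiMap, phiXmap, Sum.map, Function.comp, Sum.elim_inl, Sum.elim_inr]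
    split_ifs with h
    · simp
    · exact absurd (Nat.lt_succ_iff.mp i.2) h

private lemma chi_phiY (u : Fin (b₁ + 1) ⊕ Fin (b₂ + 1)) :
    Quotient.mk (Relation.EqvGen.setoid (rho X Y)) (chiMap X Y (phiYmap a₁ a₂ b₁ b₂ u)) =
      Quotient.mk (Relation.EqvGen.setoid (rho X Y)) (Sum.inr (Quotient.mk _ u)) := by
  rcases u with i | i
  · simp only [chiMap, phiYmap, Sum.map, Function.comp, Sum.elim_inl]
    split_ifs with h
    · have h0 : i = 0 := by
        apply Fin.ext
        simp only [Fin.val_zero]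
        omega
      subst h0
      exact rho_rel1 X Y _ _ (mkcongr _ (congrArg Sum.inl (Fin.ext (by simp)))) rfl
    · exact mkcongr _ (congrArg Sum.inr (mkcongr _ (congrArg Sum.inl
        (Fin.ext (show a₁ + i.1 - a₁ = i.1 by omega)))))
  · simp only [chiMap, phiYmap, Sum.map, Function.comp, Sum.elim_inr]
    split_ifs with h
    · have h0 : i = 0 := by
        apply Fin.ext
        simp only [Fin.val_zero]
        omega
      subst h0
      exact rho_rel2 X Y _ _ (mkcongr _ (congrArg Sum.inr (Fin.ext (by simp)))) rfl
    · exact mkcongr _ (congrArg Sum.inr (mkcongr _ (congrArg Sum.inr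
        (Fin.ext (show a₂ + i.1 - a₂ = i.1 by omega)))))

private lemma key (G : DLD (n + n') (a₁ + b₁) (a₂ + b₂)) (hG : IsConcatDLD X Y G) :
    Nat.card (Quotient (Relation.EqvGen.setoid (rrD G))) =
      Nat.card (Quotient (Relation.EqvGen.setoid (rho X Y))) := by
  obtain ⟨h1, h2, h3, h4⟩ := hG
  have hGX : ∀ p : Fin a₁ ⊕ Fin a₂,
      G.c (iXmap a₁ a₂ b₁ b₂ p) = Fin.castAdd n' (X.c p) := by
    rintro (i | i)
    · exact h1 i
    · exact h3 i
  have hGY : ∀ p : Fin b₁ ⊕ Fin b₂,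
      G.c (iYmap a₁ a₂ b₁ b₂ p) = Fin.natAdd n (Y.c p) := by
    rintro (i | i)
    · exact h2 i
    · exact h4 i
  have hiXinj : Function.Injective (iXmap a₁ a₂ b₁ b₂) :=
    Function.Injective.sumMap (Fin.castAdd_injective _ _) (Fin.castAdd_injective _ _)
  have hnatinj : ∀ (k m : ℕ), Function.Injective (Fin.natAdd k : Fin m → Fin (k + m)) := by
    intro k m i j hij
    apply Fin.ext
    have hv : k + i.1 = k + j.1 := congrArg Fin.val hij
    omega
  have hiYinj : Function.Injective (iYmap a₁ a₂ b₁ b₂) :=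
    Function.Injective.sumMap (hnatinj _ _) (hnatinj _ _)
  have hOX : ∀ p, otherPt G.c (iXmap a₁ a₂ b₁ b₂ p) = iXmap a₁ a₂ b₁ b₂ (otherPt X.c p) := by
    intro p
    obtain ⟨hc, hne, -⟩ := otherPt_spec X.c X.two p
    refine ((otherPt_spec G.c G.two (iXmap a₁ a₂ b₁ b₂ p)).2.2 _ ?_ ?_).symm
    · rw [hGX, hGX, hc]
    · exact fun h => hne (hiXinj h)
  have hOY : ∀ p, otherPt G.c (iYmap a₁ a₂ b₁ b₂ p) = iYmap a₁ a₂ b₁ b₂ (otherPt Y.c p) := by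
    intro p
    obtain ⟨hc, hne, -⟩ := otherPt_spec Y.c Y.two p
    refine ((otherPt_spec G.c G.two (iYmap a₁ a₂ b₁ b₂ p)).2.2 _ ?_ ?_).symm
    · rw [hGY, hGY, hc]
    · exact fun h => hne (hiYinj h)
  have hdecomp : ∀ p : Fin (a₁ + b₁) ⊕ Fin (a₂ + b₂),
      (∃ p', p = iXmap a₁ a₂ b₁ b₂ p') ∨ (∃ p', p = iYmap a₁ a₂ b₁ b₂ p') := by
    rintro (j | j)
    · by_cases hj : j.1 < a₁
      · exact Or.inl ⟨Sum.inl ⟨j.1, hj⟩, congrArg Sum.inl (Fin.ext rfl)⟩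
      · refine Or.inr ⟨Sum.inl ⟨j.1 - a₁, by have := j.2; omega⟩, congrArg Sum.inl
          (Fin.ext (show j.1 = a₁ + (j.1 - a₁) by omega))⟩
    · by_cases hj : j.1 < a₂
      · exact Or.inl ⟨Sum.inr ⟨j.1, hj⟩, congrArg Sum.inr (Fin.ext rfl)⟩
      · refine Or.inr ⟨Sum.inr ⟨j.1 - a₂, by have := j.2; omega⟩, congrArg Sum.inr
          (Fin.ext (show j.1 = a₂ + (j.1 - a₂) by omega))⟩
  have hwX : ∀ s t, Relation.EqvGen (rrD X) s t →
      Quotient.mk (Relation.EqvGen.setoid (rrD G)) (phiXmap a₁ a₂ b₁ b₂ s) =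
      Quotient.mk (Relation.EqvGen.setoid (rrD G)) (phiXmap a₁ a₂ b₁ b₂ t) := by
    refine eqvGen_eq ?_
    rintro s t ⟨p, hs, ht⟩
    refine Quotient.sound (Relation.EqvGen.rel _ _ ⟨iXmap a₁ a₂ b₁ b₂ p, ?_, ?_⟩)
    · rw [hs]; exact (segBefore_iX a₁ a₂ b₁ b₂ p).symm
    · rw [ht, hOX p]; exact (segAfter_iX a₁ a₂ b₁ b₂ _).symm
  have hwY : ∀ s t, Relation.EqvGen (rrD Y) s t →
      Quotient.mk (Relation.EqvGen.setoid (rrD G)) (phiYmap a₁ a₂ b₁ b₂ s) =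
      Quotient.mk (Relation.EqvGen.setoid (rrD G)) (phiYmap a₁ a₂ b₁ b₂ t) := by
    refine eqvGen_eq ?_
    rintro s t ⟨p, hs, ht⟩
    refine Quotient.sound (Relation.EqvGen.rel _ _ ⟨iYmap a₁ a₂ b₁ b₂ p, ?_, ?_⟩)
    · rw [hs]; exact (segBefore_iY a₁ a₂ b₁ b₂ p).symm
    · rw [ht, hOY p]; exact (segAfter_iY a₁ a₂ b₁ b₂ _).symm
  have hwChi : ∀ s t, Relation.EqvGen (rrD G) s t →
      Quotient.mk (Relation.EqvGen.setoid (rho X Y)) (chiMap X Y s) =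
      Quotient.mk (Relation.EqvGen.setoid (rho X Y)) (chiMap X Y t) := by
    refine eqvGen_eq ?_
    rintro s t ⟨p, hs, ht⟩
    rcases hdecomp p with ⟨p', rfl⟩ | ⟨p', rfl⟩
    · rw [hs, ht, hOX p', segBefore_iX, segAfter_iX, chi_phiX, chi_phiX]
      exact mkcongr _ (congrArg Sum.inl (Quotient.sound
        (Relation.EqvGen.rel _ _ ⟨p', rfl, rfl⟩)))
    · rw [hs, ht, hOY p', segBefore_iY, segAfter_iY, chi_phiY, chi_phiY]
      exact mkcongr _ (congrArg Sum.inr (Quotient.sound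
        (Relation.EqvGen.rel _ _ ⟨p', rfl, rfl⟩)))
  have hglue1 : phiXmap a₁ a₂ b₁ b₂ (Sum.inl (Fin.last a₁)) =
      phiYmap a₁ a₂ b₁ b₂ (Sum.inl 0) := by
    simp [phiXmap, phiYmap, Sum.map, Fin.ext_iff]
  have hglue2 : phiXmap a₁ a₂ b₁ b₂ (Sum.inr (Fin.last a₂)) =
      phiYmap a₁ a₂ b₁ b₂ (Sum.inr 0) := by
    simp [phiXmap, phiYmap, Sum.map, Fin.ext_iff]
  refine Nat.card_congr (Equiv.mk
    (Quotient.lift (fun s => Quotient.mk (Relation.EqvGen.setoid (rho X Y)) (chiMap X Y s)) hwChi)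
    (Quotient.lift (Sum.elim
      (Quotient.lift (fun u =>
        Quotient.mk (Relation.EqvGen.setoid (rrD G)) (phiXmap a₁ a₂ b₁ b₂ u)) hwX)
      (Quotient.lift (fun u =>
        Quotient.mk (Relation.EqvGen.setoid (rrD G)) (phiYmap a₁ a₂ b₁ b₂ u)) hwY)) ?_)
    ?_ ?_)
  · refine eqvGen_eq ?_
    rintro u v (⟨rfl, rfl⟩ | ⟨rfl, rfl⟩)
    · exact mkcongr _ hglue1
    · exact mkcongr _ hglue2
  · refine Quotient.ind ?_
    rintro (j | j)
    · simp only [Quotient.lift_mk, chiMap, Sum.elim_inl]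
      split_ifs with hj
      · simp only [Sum.elim_inl, Quotient.lift_mk]
        exact mkcongr _ (congrArg Sum.inl (Fin.ext rfl))
      · simp only [Sum.elim_inr, Quotient.lift_mk]
        exact mkcongr _ (congrArg Sum.inl (Fin.ext (show a₁ + (j.1 - a₁) = j.1 by omega)))
    · simp only [Quotient.lift_mk, chiMap, Sum.elim_inr]
      split_ifs with hj
      · simp only [Sum.elim_inl, Quotient.lift_mk]
        exact mkcongr _ (congrArg Sum.inr (Fin.ext rfl))
      · simp only [Sum.elim_inr, Quotient.lift_mk]
        exact mkcongr _ (congrArg Sum.inr (Fin.ext (show a₂ + (j.1 - a₂) = j.1 by omega)))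
  · refine Quotient.ind ?_
    rintro (qx | qy)
    · induction qx using Quotient.ind with
      | _ u =>
        simp only [Quotient.lift_mk, Sum.elim_inl]
        rw [chi_phiX]
    · induction qy using Quotient.ind with
      | _ u =>
        simp only [Quotient.lift_mk, Sum.elim_inr]
        exact chi_phiY X Y u

end Main

end BetaConcatAux

/-- For double linear diagrams `X`, `Y` with marked (ordered)
lines, the marked connected sum satisfies
`β_{X # Y} = β_X + β_Y − c` with `c ∈ {1, 2}` depending only on `X` and `Y` and
not on the choice of gluing. -/
theorem betaDLD_concat (n n' a₁ a₂ b₁ b₂ : ℕ) (X : DLD n a₁ a₂) (Y : DLD n' b₁ b₂) :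
    ∃ c : ℕ, (c = 1 ∨ c = 2) ∧
      ∀ G : DLD (n + n') (a₁ + b₁) (a₂ + b₂),
        IsConcatDLD X Y G → betaDLD G + c = betaDLD X + betaDLD Y := by
  refine ⟨Nat.card {x // ¬ BetaConcatAux.dmap X Y x = x}, BetaConcatAux.moved_card X Y, ?_⟩
  intro G hG
  rw [BetaConcatAux.betaD_eq, BetaConcatAux.betaD_eq, BetaConcatAux.betaD_eq,
    BetaConcatAux.key X Y G hG]
  exact BetaConcatAux.count_rho X Y
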